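/- Let I and K be ideals on ℕ such that the join I ∨ K = {A ∪ B : A ∈ I, B ∈ K} is a nontrivial (proper) ideal on ℕ, and let X be a real normed space. If a sequence (x_n) in X is weakly I^K-convergent to both x and y, then x = y. -/

import Mathlib

open Classical Filter

/-- An ideal on ℕ: contains ∅, closed under subsets and finite unions. -/
def IsIdeal (I : Set (Set ℕ)) : Prop :=
  ∅ ∈ I ∧ (∀ A B : Set ℕ, A ∈ I → B ⊆ A → B ∈ I) ∧
    (∀ A B : Set ℕ, A ∈ I → B ∈ I → A ∪ B ∈ I)

/-- A nontrivial (proper) ideal. -/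
def NontrivialIdeal (I : Set (Set ℕ)) : Prop :=
  IsIdeal I ∧ Set.univ ∉ I ∧ I ≠ {∅}

/-- An admissible ideal: nontrivial and containing all singletons. -/
def AdmissibleIdeal (I : Set (Set ℕ)) : Prop :=
  NontrivialIdeal I ∧ ∀ n : ℕ, ({n} : Set ℕ) ∈ I

/-- The modified sequence: `x n` on `M`, the constant `a` off `M`. -/
noncomputable def modSeq {X : Type*} (M : Set ℕ) (x : ℕ → X) (a : X) : ℕ → X :=
  fun n => if n ∈ M then x n else a

/-- Weak `K`-convergence of a sequence in a normed space. -/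
def WeakConv {X : Type*} [NormedAddCommGroup X] [NormedSpace ℝ X]
    (K : Set (Set ℕ)) (x : ℕ → X) (a : X) : Prop :=
  ∀ f : X →L[ℝ] ℝ, ∀ ε : ℝ, 0 < ε → {n : ℕ | ε ≤ |f (x n) - f a|} ∈ K

/-- Weak `I^K`-convergence: some `M` in the dual filter of `I` such that the
modified sequence is weakly `K`-convergent. -/
def WeakIK {X : Type*} [NormedAddCommGroup X] [NormedSpace ℝ X]
    (I K : Set (Set ℕ)) (x : ℕ → X) (a : X) : Prop :=
  ∃ M : Set ℕ, Mᶜ ∈ I ∧ WeakConv K (modSeq M x a) a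

/-- Ordinary weak convergence. -/
def WeakTendsto {X : Type*} [NormedAddCommGroup X] [NormedSpace ℝ X]
    (x : ℕ → X) (a : X) : Prop :=
  ∀ f : X →L[ℝ] ℝ, Tendsto (fun n => f (x n)) atTop (nhds (f a))

/-- Weak* `K`-convergence of a sequence of continuous linear functionals. -/
def WeakStarConv {X : Type*} [NormedAddCommGroup X] [NormedSpace ℝ X]
    (K : Set (Set ℕ)) (f : ℕ → X →L[ℝ] ℝ) (g : X →L[ℝ] ℝ) : Prop :=
  ∀ x : X, ∀ ε : ℝ, 0 < ε → {n : ℕ | ε ≤ |f n x - g x|} ∈ K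

/-- Weak* `I^K`-convergence. -/
def WeakStarIK {X : Type*} [NormedAddCommGroup X] [NormedSpace ℝ X]
    (I K : Set (Set ℕ)) (f : ℕ → X →L[ℝ] ℝ) (g : X →L[ℝ] ℝ) : Prop :=
  ∃ M : Set ℕ, Mᶜ ∈ I ∧ WeakStarConv K (modSeq M f g) g

/-- Ordinary weak* convergence (pointwise on X). -/
def WeakStarTendsto {X : Type*} [NormedAddCommGroup X] [NormedSpace ℝ X]
    (f : ℕ → X →L[ℝ] ℝ) (g : X →L[ℝ] ℝ) : Prop :=
  ∀ x : X, Tendsto (fun n => f n x) atTop (nhds (g x))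

/-- The join of two ideals: `{A ∪ B : A ∈ I, B ∈ K}`. -/
def idealJoin (I K : Set (Set ℕ)) : Set (Set ℕ) :=
  {C | ∃ A ∈ I, ∃ B ∈ K, C = A ∪ B}

theorem stmt_7 {X : Type*} [NormedAddCommGroup X] [NormedSpace ℝ X]
    (I K : Set (Set ℕ)) (hI : IsIdeal I) (hK : IsIdeal K)
    (hjoin : Set.univ ∉ idealJoin I K)
    (z : ℕ → X) (x y : X)
    (hx : WeakIK I K z x) (hy : WeakIK I K z y) : x = y := by
  by_contra hne
  have hxy : x - y ≠ 0 := sub_ne_zero.mpr hne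
  obtain ⟨f, hf1, hfx⟩ := exists_dual_vector ℝ (x - y) (norm_ne_zero_iff.mpr hxy)
  set c : ℝ := ‖x - y‖ with hc
  have hcpos : 0 < c := norm_pos_iff.mpr hxy
  have hfd : f x - f y = c := by
    have := hfx
    simp only [map_sub] at this
    exact_mod_cast this
  obtain ⟨M₁, hM₁, hW₁⟩ := hx
  obtain ⟨M₂, hM₂, hW₂⟩ := hy
  have hε : 0 < c / 2 := by positivity
  have hS₁ := hW₁ f (c / 2) hε
  have hS₂ := hW₂ f (c / 2) hε
  have hA : M₁ᶜ ∪ M₂ᶜ ∈ I := hI.2.2 _ _ hM₁ hM₂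
  have hB : {n : ℕ | c / 2 ≤ |f (modSeq M₁ z x n) - f x|} ∪
      {n : ℕ | c / 2 ≤ |f (modSeq M₂ z y n) - f y|} ∈ K := hK.2.2 _ _ hS₁ hS₂
  apply hjoin
  refine ⟨_, hA, _, hB, ?_⟩
  ext n
  simp only [Set.mem_univ, Set.mem_union, Set.mem_compl_iff, Set.mem_setOf_eq, true_iff]
  by_contra h
  push_neg at h
  obtain ⟨⟨h1, h2⟩, h3, h4⟩ := h
  rw [modSeq, if_pos h1] at h3
  rw [modSeq, if_pos h2] at h4
  have : |f x - f y| < c := by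
    calc |f x - f y| ≤ |f (z n) - f x| + |f (z n) - f y| := by
          rw [abs_sub_comm (f (z n)) (f x)]
          have := abs_sub (f x) (f y)
          calc |f x - f y| = |(f x - f (z n)) + (f (z n) - f y)| := by ring_nf
            _ ≤ |f x - f (z n)| + |f (z n) - f y| := abs_add_le _ _
      _ < c / 2 + c / 2 := add_lt_add h3 h4
      _ = c := by ring
  rw [hfd] at this
  simp [abs_of_pos hcpos] at this
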